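/- For every positive integer i and every real number t ≠ 0, the i-th derivative of the function g(t) = e^{-1/t} is given by g^{(i)}(t) = e^{-1/t} t^{-2i} Σ_{k=0}^{i-1} (-1)^k a_{i,k} t^k, where a_{i,k} = C(i,k) · C(i-1,k) · k!. -/

import Mathlib

open Finset


noncomputable def dd (n k : ℕ) : ℝ :=
  ((n + 1).choose k : ℝ) * (n.choose k : ℝ) * (k.factorial : ℝ)

lemma hre (n k : ℕ) : ((k : ℝ) + 1) * (n.choose (k + 1) : ℝ) = ((n : ℝ) - k) * (n.choose k : ℝ) := by
  rcases lt_or_ge k n with h | h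
  · have h4 : ((n.choose (k+1) * (k+1) : ℕ) : ℝ) = ((n.choose k * (n - k) : ℕ) : ℝ) := by
      exact_mod_cast congrArg (Nat.cast (R := ℝ)) (Nat.choose_succ_right_eq n k)
    push_cast [Nat.cast_sub h.le] at h4
    linarith
  · rcases eq_or_lt_of_le h with rfl | h2
    · simp [Nat.choose_succ_self]
    · rw [Nat.choose_eq_zero_of_lt (by omega), Nat.choose_eq_zero_of_lt h2]
      simp

lemma key (j k : ℕ) : dd (j + 1) (k + 1) = dd j (k + 1) + (2 * (j : ℝ) + 2 - k) * dd j k := by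
  unfold dd
  have p1 : ((j + 2).choose (k + 1) : ℝ) = ((j+1).choose k : ℝ) + ((j+1).choose (k+1) : ℝ) := by
    exact_mod_cast congrArg (Nat.cast (R := ℝ)) (Nat.choose_succ_succ (j+1) k)
  have p2 : ((j + 1).choose (k + 1) : ℝ) = ((j).choose k : ℝ) + ((j).choose (k+1) : ℝ) := by
    exact_mod_cast congrArg (Nat.cast (R := ℝ)) (Nat.choose_succ_succ j k)
  have e1 := hre (j+1) k
  have e2 := hre j k
  have hf : ((k+1).factorial : ℝ) = ((k:ℝ)+1) * (k.factorial : ℝ) := by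
    rw [Nat.factorial_succ]; push_cast; ring
  push_cast at p1 e1 ⊢
  rw [p1, p2, hf]
  linear_combination ((j.choose k : ℝ) * (k.factorial : ℝ)) * e1 + (((j+1).choose k : ℝ) * (k.factorial : ℝ)) * e2 - ((j.choose k : ℝ) * ((k:ℝ)+1) * (k.factorial : ℝ)) * p2

lemma hdd0 (n : ℕ) : dd n 0 = 1 := by simp [dd]

lemma hddtop (j : ℕ) : dd j (j + 1) = 0 := by
  simp [dd, Nat.choose_eq_zero_of_lt (Nat.lt_succ_self j)]

lemma sum_key (j : ℕ) (t : ℝ) :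
    ∑ k ∈ range (j + 2), (-1 : ℝ) ^ k * dd (j + 1) k * t ^ k =
      ∑ k ∈ range (j + 1), (-1 : ℝ) ^ k * dd j k * t ^ k +
        ∑ k ∈ range (j + 1), (-1 : ℝ) ^ k * dd j k * ((k : ℝ) - (2 * j + 2)) * t ^ (k + 1) := by
  have hA : ∑ k ∈ range (j + 1), (-1 : ℝ) ^ (k + 1) * dd j (k + 1) * t ^ (k + 1) + dd j 0 =
      ∑ k ∈ range (j + 1), (-1 : ℝ) ^ k * dd j k * t ^ k := by
    have h1 := Finset.sum_range_succ' (fun k => (-1 : ℝ) ^ k * dd j k * t ^ k) (j + 1)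
    have h2 := Finset.sum_range_succ (fun k => (-1 : ℝ) ^ k * dd j k * t ^ k) (j + 1)
    simp only [pow_zero, one_mul, mul_one] at h1
    rw [h2, hddtop] at h1
    simp only [mul_zero, zero_mul, add_zero] at h1
    linarith [h1]
  rw [hdd0] at hA
  rw [Finset.sum_range_succ' (fun k => (-1 : ℝ) ^ k * dd (j + 1) k * t ^ k) (j + 1)]
  simp only [pow_zero, one_mul, mul_one]
  rw [hdd0 (j+1), ← hA]
  rw [Finset.sum_congr rfl (fun k _ => by rw [key j k]; ring :
    ∀ k ∈ range (j + 1), (-1 : ℝ) ^ (k + 1) * dd (j + 1) (k + 1) * t ^ (k + 1) =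
      (-1 : ℝ) ^ (k + 1) * dd j (k + 1) * t ^ (k + 1) +
        (-1 : ℝ) ^ k * dd j k * ((k : ℝ) - (2 * j + 2)) * t ^ (k + 1))]
  rw [Finset.sum_add_distrib]
  ring

lemma hexp (t : ℝ) (ht : t ≠ 0) :
    HasDerivAt (fun x : ℝ => Real.exp (-1 / x)) (Real.exp (-1 / t) * (t ^ 2)⁻¹) t := by
  have h1 : HasDerivAt (fun x : ℝ => -1 / x) ((t ^ 2)⁻¹) t := by
    have := (hasDerivAt_inv ht).fun_neg
    simpa [neg_div, one_div] using this
  simpa using h1.exp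

lemma hasDeriv_F (j : ℕ) (t : ℝ) (ht : t ≠ 0) :
    HasDerivAt
      (fun x : ℝ => Real.exp (-1 / x) / x ^ (2 * (j + 1)) *
        ∑ k ∈ range (j + 1), (-1 : ℝ) ^ k * dd j k * x ^ k)
      (Real.exp (-1 / t) / t ^ (2 * (j + 2)) *
        ∑ k ∈ range (j + 2), (-1 : ℝ) ^ k * dd (j + 1) k * t ^ k) t := by
  set m := 2 * (j + 1) with hm
  have hinv : HasDerivAt (fun x : ℝ => (x ^ m)⁻¹)
      (-((m : ℝ) * t ^ (m - 1)) / (t ^ m) ^ 2) t :=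
    (hasDerivAt_pow m t).inv (pow_ne_zero _ ht)
  have hsum : HasDerivAt (fun x : ℝ => ∑ k ∈ range (j + 1), (-1 : ℝ) ^ k * dd j k * x ^ k)
      (∑ k ∈ range (j + 1), (-1 : ℝ) ^ k * dd j k * ((k : ℝ) * t ^ (k - 1))) t :=
    HasDerivAt.fun_sum fun k _ => (hasDerivAt_pow k t).const_mul _
  have hall := ((hexp t ht).fun_mul hinv).fun_mul hsum
  have heq : (fun x : ℝ => Real.exp (-1 / x) / x ^ m *
        ∑ k ∈ range (j + 1), (-1 : ℝ) ^ k * dd j k * x ^ k) =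
      (fun x : ℝ => Real.exp (-1 / x) * (x ^ m)⁻¹ *
        ∑ k ∈ range (j + 1), (-1 : ℝ) ^ k * dd j k * x ^ k) := by
    funext x; rw [div_eq_mul_inv]
  rw [heq]
  refine hall.congr_deriv ?_
  set S1 := ∑ k ∈ range (j + 1), (-1 : ℝ) ^ k * dd j k * t ^ k with hS1
  set D := ∑ k ∈ range (j + 1), (-1 : ℝ) ^ k * dd j k * ((k : ℝ) * t ^ (k - 1)) with hD
  have hsum2 : ∑ k ∈ range (j + 1), (-1 : ℝ) ^ k * dd j k * ((k : ℝ) - (2 * j + 2)) * t ^ (k + 1) =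
      t ^ 2 * D - (2 * (j : ℝ) + 2) * t * S1 := by
    rw [hD, hS1, Finset.mul_sum, Finset.mul_sum, ← Finset.sum_sub_distrib]
    refine Finset.sum_congr rfl fun k _ => ?_
    rcases k with _ | k'
    · simp; ring
    · push_cast
      ring
  rw [sum_key j t, hsum2]
  have hm1 : m - 1 = 2 * j + 1 := by omega
  have hm2 : 2 * (j + 2) = m + 2 := by omega
  rw [hm1, hm2]
  have hmc : ((m : ℝ)) = 2 * (j : ℝ) + 2 := by rw [hm]; push_cast; ring
  rw [hmc]
  have hE := Real.exp_ne_zero (-1 / t)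
  field_simp
  ring


lemma main_lemma (j : ℕ) : ∀ t : ℝ, t ≠ 0 →
    iteratedDeriv (j + 1) (fun x : ℝ => Real.exp (-1 / x)) t =
      Real.exp (-1 / t) / t ^ (2 * (j + 1)) *
        ∑ k ∈ range (j + 1), (-1 : ℝ) ^ k * dd j k * t ^ k := by
  induction j with
  | zero =>
    intro t ht
    rw [iteratedDeriv_one]
    rw [(hexp t ht).deriv]
    simp [hdd0, div_eq_mul_inv]
  | succ j ih =>
    intro t ht
    rw [show j + 1 + 1 = (j + 1) + 1 from rfl, iteratedDeriv_succ]
    have hev : iteratedDeriv (j + 1) (fun x : ℝ => Real.exp (-1 / x)) =ᶠ[nhds t]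
        (fun x : ℝ => Real.exp (-1 / x) / x ^ (2 * (j + 1)) *
          ∑ k ∈ range (j + 1), (-1 : ℝ) ^ k * dd j k * x ^ k) := by
      filter_upwards [eventually_ne_nhds ht] with x hx
      exact ih x hx
    rw [hev.deriv_eq]
    exact (hasDeriv_F j t ht).deriv

/-- For every positive integer `i` and every real `t ≠ 0`, the
`i`-th derivative of `g(t) = exp (-1/t)` equals
`exp (-1/t) / t^(2i) * ∑_{k=0}^{i-1} (-1)^k a_{i,k} t^k`,
where `a_{i,k} = C(i,k) * C(i-1,k) * k!`. -/
theorem iteratedDeriv_exp_neg_one_div (i : ℕ) (hi : 1 ≤ i) (t : ℝ) (ht : t ≠ 0) :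
    iteratedDeriv i (fun x : ℝ => Real.exp (-1 / x)) t =
      Real.exp (-1 / t) / t ^ (2 * i) *
        ∑ k ∈ Finset.range i,
          (-1 : ℝ) ^ k *
            ((Nat.choose i k : ℝ) * (Nat.choose (i - 1) k : ℝ) * (Nat.factorial k : ℝ)) * t ^ k := by
  obtain ⟨j, rfl⟩ : ∃ j, i = j + 1 := ⟨i - 1, (Nat.succ_pred_eq_of_pos hi).symm⟩
  have := main_lemma j t ht
  simpa [dd] using this
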